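/- Let q ≥ log 2, and let A = {z : d·e^{-r} < |z - o₁| < d·e^r} and B = {z : c·e^{-s} < |z - o₂| < c·e^s} be two annuli contained in a domain Ω ⊂ ℂ, with centers o₁, o₂ ∈ ℂ \ Ω and r, s > q. Suppose the q-cores {z : d·e^{-(r-q)} < |z - o₁| < d·e^{r-q}} and {z : c·e^{-(s-q)} < |z - o₂| < c·e^{s-q}} intersect. Then |o₁ - o₂| ≤ min(d·e^{-r}, c·e^{-s}). -/

import Mathlib

/-- If two annuli in a domain `Ω` with centers in `ℂ \ Ω` have intersecting `q`-cores
(`q ≥ log 2`), then their centers are close: `|o₁ - o₂| ≤ min(d·e^{-r}, c·e^{-s})`. -/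
theorem centers_close_of_cores_intersect
    (Ω : Set ℂ) (hΩo : IsOpen Ω) (hΩc : IsConnected Ω)
    (o₁ o₂ : ℂ) (d c r s q : ℝ) (hd : 0 < d) (hc : 0 < c)
    (hq : Real.log 2 ≤ q) (hr : q < r) (hs : q < s)
    (ho₁ : o₁ ∉ Ω) (ho₂ : o₂ ∉ Ω)
    (hA : ∀ z : ℂ, d * Real.exp (-r) < ‖z - o₁‖ →
      ‖z - o₁‖ < d * Real.exp r → z ∈ Ω)
    (hB : ∀ z : ℂ, c * Real.exp (-s) < ‖z - o₂‖ →
      ‖z - o₂‖ < c * Real.exp s → z ∈ Ω)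
    (hmeet : ∃ z : ℂ,
      (d * Real.exp (-(r - q)) < ‖z - o₁‖ ∧
        ‖z - o₁‖ < d * Real.exp (r - q)) ∧
      (c * Real.exp (-(s - q)) < ‖z - o₂‖ ∧
        ‖z - o₂‖ < c * Real.exp (s - q))) :
    ‖o₁ - o₂‖ ≤ min (d * Real.exp (-r)) (c * Real.exp (-s)) := by
  obtain ⟨z, ⟨hz1, hz2⟩, hz3, hz4⟩ := hmeet
  have h2 : (2:ℝ) ≤ Real.exp q := by
    calc (2:ℝ) = Real.exp (Real.log 2) := (Real.exp_log (by norm_num)).symm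
    _ ≤ Real.exp q := Real.exp_le_exp.mpr hq
  -- o₂ is not in annulus A
  have hd1 : ‖o₂ - o₁‖ ≤ d * Real.exp (-r) ∨
      d * Real.exp r ≤ ‖o₂ - o₁‖ := by
    by_contra h
    push_neg at h
    exact ho₂ (hA o₂ h.1 h.2)
  -- o₁ is not in annulus B
  have hc1 : ‖o₁ - o₂‖ ≤ c * Real.exp (-s) ∨
      c * Real.exp s ≤ ‖o₁ - o₂‖ := by
    by_contra h
    push_neg at h
    exact ho₁ (hB o₁ h.1 h.2)
  have habs : ‖o₂ - o₁‖ = ‖o₁ - o₂‖ :=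
    norm_sub_rev o₂ o₁
  rw [habs] at hd1
  set D := ‖o₁ - o₂‖ with hD
  set a1 := ‖z - o₁‖ with ha1
  set a2 := ‖z - o₂‖ with ha2
  have htri1 : D ≤ a1 + a2 := by
    calc D = ‖(o₁ - z) + (z - o₂)‖ := by ring_nf; rfl
    _ ≤ ‖o₁ - z‖ + ‖z - o₂‖ := norm_add_le _ _
    _ = a1 + a2 := by rw [norm_sub_rev o₁ z]
  have htri2 : a2 ≤ a1 + D := by
    calc a2 = ‖(z - o₁) + (o₁ - o₂)‖ := by ring_nf; rfl
    _ ≤ _ := norm_add_le _ _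
  have htri3 : a1 ≤ a2 + D := by
    calc a1 = ‖(z - o₂) + (o₂ - o₁)‖ := by ring_nf; rfl
    _ ≤ ‖z - o₂‖ + ‖o₂ - o₁‖ := norm_add_le _ _
    _ = a2 + D := by rw [norm_sub_rev o₂ o₁]
  -- exponential identities
  have e1 : Real.exp (r - q) * Real.exp q = Real.exp r := by
    rw [← Real.exp_add]; ring_nf
  have e2 : Real.exp (s - q) * Real.exp q = Real.exp s := by
    rw [← Real.exp_add]; ring_nf
  have e3 : Real.exp (-(r - q)) = Real.exp (-r) * Real.exp q := by
    rw [← Real.exp_add]; ring_nf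
  have e4 : Real.exp (-(s - q)) = Real.exp (-s) * Real.exp q := by
    rw [← Real.exp_add]; ring_nf
  have p1 : (0:ℝ) < Real.exp (r - q) := Real.exp_pos _
  have p2 : (0:ℝ) < Real.exp (s - q) := Real.exp_pos _
  have p3 : (0:ℝ) < Real.exp (-r) := Real.exp_pos _
  have p4 : (0:ℝ) < Real.exp (-s) := Real.exp_pos _
  rcases hd1 with h1 | h1 <;> rcases hc1 with h3 | h3
  · exact le_min h1 h3
  · -- D ≤ d e^{-r} and D ≥ c e^s : contradiction
    exfalso
    nlinarith [hz1, hz2, hz3, hz4, htri2, htri3, mul_pos hd p1, mul_pos hc p2,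
      mul_pos hd p3, mul_pos hc p4]
  · exfalso
    nlinarith [hz1, hz2, hz3, hz4, htri2, htri3, mul_pos hd p1, mul_pos hc p2,
      mul_pos hd p3, mul_pos hc p4]
  · -- D ≥ d e^r and D ≥ c e^s : contradiction with triangle
    exfalso
    nlinarith [hz2, hz4, htri1, mul_pos hd p1, mul_pos hc p2]
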